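/- Let p ≥ 2 be an even integer. Then sup over nonzero 2π-periodic odd η ∈ L^{2p}(𝕋) of the quotient (∫₀^{2π}∫₀^{2π} (η(s₁)−η(s₂))^p ds₁ds₂)² / (2 ∫₀^{2π}∫₀^{2π} (η(s₁)−η(s₂))^{2p} ds₁ds₂) is at most π². -/

import Mathlib

open MeasureTheory Real intervalIntegral

theorem stmt6 (p : ℕ) (hp : 2 ≤ p) (hpe : Even p) :
    ∀ η : ℝ → ℝ, Measurable η →
      (∀ s, η (s + 2*π) = η s) → (∀ s, η (-s) = - η s) →
      IntegrableOn (fun s => |η s|^(2*p)) (Set.Icc 0 (2*π)) →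
      (∃ s, η s ≠ 0) →
      0 < (∫ s₁ in (0:ℝ)..(2*π), ∫ s₂ in (0:ℝ)..(2*π), (η s₁ - η s₂)^(2*p)) →
      (∫ s₁ in (0:ℝ)..(2*π), ∫ s₂ in (0:ℝ)..(2*π), (η s₁ - η s₂)^p)^2 /
        (2 * ∫ s₁ in (0:ℝ)..(2*π), ∫ s₂ in (0:ℝ)..(2*π), (η s₁ - η s₂)^(2*p))
        ≤ π^2 := by
  intro η hmeas hper hodd hint _hne hpos
  have hπ : (0:ℝ) < 2*π := by positivity
  set I : ℕ → ℝ := fun j => ∫ s in (0:ℝ)..(2*π), η s ^ j with hIdef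
  -- integrability of all powers up to 2p
  have hii : ∀ j, j ≤ 2*p → IntervalIntegrable (fun s => η s ^ j) volume 0 (2*π) := by
    intro j hj
    rw [intervalIntegrable_iff_integrableOn_Icc_of_le hπ.le]
    have hg : IntegrableOn (fun s => 1 + |η s|^(2*p)) (Set.Icc 0 (2*π)) :=
      (integrableOn_const measure_Icc_lt_top.ne).add hint
    refine hg.mono' ((hmeas.pow_const j).aestronglyMeasurable) (ae_of_all _ (fun s => ?_))
    have h1 : ‖η s ^ j‖ = |η s| ^ j := by rw [Real.norm_eq_abs, abs_pow]
    rw [h1]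
    rcases le_total (|η s|) 1 with h | h
    · have := pow_le_one₀ (n := j) (abs_nonneg (η s)) h
      nlinarith [pow_nonneg (abs_nonneg (η s)) (2*p)]
    · have := pow_le_pow_right₀ h hj
      nlinarith
  -- odd moments vanish
  have hIodd : ∀ j, Odd j → I j = 0 := by
    intro j hj
    have hper' : Function.Periodic (fun s => η s ^ j) (2*π) := fun s => by simp [hper s]
    have h1 : I j = ∫ s in (-π)..(-π + 2*π), η s ^ j := by
      have := hper'.intervalIntegral_add_eq 0 (-π)
      simpa [hIdef] using this
    have h2 : (-π + 2*π : ℝ) = π := by ring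
    rw [h2] at h1
    have h3 : (∫ s in (-π:ℝ)..π, η (-s) ^ j) = ∫ s in (-π:ℝ)..π, η s ^ j := by
      have := intervalIntegral.integral_comp_neg (fun s => η s ^ j) (a := -π) (b := π)
      simpa using this
    have h4 : (∫ s in (-π:ℝ)..π, η (-s) ^ j) = - ∫ s in (-π:ℝ)..π, η s ^ j := by
      have : ∀ s : ℝ, η (-s) ^ j = -(η s ^ j) := by
        intro s; rw [hodd s, hj.neg_pow]
      simp_rw [this]
      exact intervalIntegral.integral_neg
    rw [h1]
    have := h3.symm.trans h4
    linarith
  -- nonnegativity of even moments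
  have hInn : ∀ j, Even j → 0 ≤ I j :=
    fun j hj => intervalIntegral.integral_nonneg hπ.le (fun s _ => hj.pow_nonneg _)
  -- binomial expansion of the double integrals
  have hexp : ∀ n, n ≤ 2*p →
      (∫ s₁ in (0:ℝ)..(2*π), ∫ s₂ in (0:ℝ)..(2*π), (η s₁ - η s₂)^n)
        = ∑ m ∈ Finset.range (n+1), (-1:ℝ)^(m+n) * n.choose m * I m * I (n-m) := by
    intro n hn
    have inner : ∀ x : ℝ, (∫ s₂ in (0:ℝ)..(2*π), (x - η s₂)^n)
        = ∑ m ∈ Finset.range (n+1), ((-1:ℝ)^(m+n) * n.choose m * x^m) * I (n-m) := by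
      intro x
      have e : ∀ y : ℝ, (x - y)^n
          = ∑ m ∈ Finset.range (n+1), ((-1:ℝ)^(m+n) * n.choose m * x^m) * y ^ (n-m) := by
        intro y; rw [sub_pow]
        refine Finset.sum_congr rfl (fun m _ => by ring)
      simp_rw [e]
      rw [intervalIntegral.integral_finset_sum]
      · exact Finset.sum_congr rfl (fun m _ => intervalIntegral.integral_const_mul _ _)
      · intro m hm
        exact ((hii (n-m) (by omega)).const_mul _)
    simp_rw [inner]
    rw [intervalIntegral.integral_finset_sum]
    · refine Finset.sum_congr rfl (fun m hm => ?_)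
      rw [intervalIntegral.integral_mul_const]
      have : (fun s₁ => (-1:ℝ)^(m+n) * n.choose m * η s₁ ^ m)
          = fun s₁ => ((-1:ℝ)^(m+n) * n.choose m) * η s₁ ^ m := by funext s₁; ring
      rw [this, intervalIntegral.integral_const_mul]
      try ring
    · intro m hm
      have hm' : m ≤ 2*p := by
        have := Finset.mem_range.1 hm; omega
      have : (fun s₁ => ((-1:ℝ)^(m+n) * n.choose m * η s₁ ^ m) * I (n-m))
          = fun s₁ => (((-1:ℝ)^(m+n) * n.choose m) * η s₁ ^ m) * I (n-m) := by
        funext s₁; ring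
      rw [this]
      exact ((hii m hm').const_mul _).mul_const _
  -- Chebyshev's sum inequality for moments
  have hCheb : ∀ a b : ℕ, Even a → Even b → a + b ≤ 2*p → I a * I b ≤ 2*π * I (a+b) := by
    intro a b ha hb hab
    have hnn : ∀ x y : ℝ, 0 ≤ (x^a - y^a) * (x^b - y^b) := by
      intro x y
      rcases le_total (|x|) (|y|) with h | h
      · have h1 : x^a ≤ y^a := by
          rw [← ha.pow_abs x, ← ha.pow_abs y]; exact pow_le_pow_left₀ (abs_nonneg x) h a
        have h2 : x^b ≤ y^b := by
          rw [← hb.pow_abs x, ← hb.pow_abs y]; exact pow_le_pow_left₀ (abs_nonneg x) h b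
        nlinarith [h1, h2]
      · have h1 : y^a ≤ x^a := by
          rw [← ha.pow_abs x, ← ha.pow_abs y]; exact pow_le_pow_left₀ (abs_nonneg y) h a
        have h2 : y^b ≤ x^b := by
          rw [← hb.pow_abs x, ← hb.pow_abs y]; exact pow_le_pow_left₀ (abs_nonneg y) h b
        exact mul_nonneg (by linarith) (by linarith)
    have key : 0 ≤ ∫ s₁ in (0:ℝ)..(2*π), ∫ s₂ in (0:ℝ)..(2*π),
        (η s₁^a - η s₂^a) * (η s₁^b - η s₂^b) :=
      intervalIntegral.integral_nonneg hπ.le (fun x _ =>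
        intervalIntegral.integral_nonneg hπ.le (fun y _ => hnn _ _))
    have inner : ∀ x : ℝ, (∫ y in (0:ℝ)..(2*π), (x^a - η y^a) * (x^b - η y^b))
        = 2*π*(x^(a+b)) - x^a * I b - x^b * I a + I (a+b) := by
      intro x
      have e : ∀ y : ℝ, (x^a - y^a) * (x^b - y^b)
          = x^(a+b) - x^a * y^b - x^b * y^a + y^(a+b) := by
        intro y; rw [pow_add, pow_add]; ring
      simp_rw [e]
      rw [intervalIntegral.integral_add (((_root_.intervalIntegrable_const).sub
            ((hii b (by omega)).const_mul _)).sub ((hii a (by omega)).const_mul _))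
          (hii (a+b) hab),
        intervalIntegral.integral_sub ((_root_.intervalIntegrable_const).sub
            ((hii b (by omega)).const_mul _)) ((hii a (by omega)).const_mul _),
        intervalIntegral.integral_sub (_root_.intervalIntegrable_const)
            ((hii b (by omega)).const_mul _),
        intervalIntegral.integral_const, intervalIntegral.integral_const_mul,
        intervalIntegral.integral_const_mul]
      try simp [hIdef]
      try ring
    simp_rw [inner] at key
    have outer : (∫ x in (0:ℝ)..(2*π),
        (2*π*(η x^(a+b)) - η x^a * I b - η x^b * I a + I (a+b)))
        = 2*π * I (a+b) - I a * I b - I b * I a + 2*π * I (a+b) := by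
      rw [intervalIntegral.integral_add (((((hii (a+b) hab).const_mul _)).sub
            ((hii a (by omega)).mul_const _)).sub ((hii b (by omega)).mul_const _))
          (_root_.intervalIntegrable_const),
        intervalIntegral.integral_sub ((((hii (a+b) hab).const_mul _)).sub
            ((hii a (by omega)).mul_const _)) ((hii b (by omega)).mul_const _),
        intervalIntegral.integral_sub (((hii (a+b) hab).const_mul _))
            ((hii a (by omega)).mul_const _),
        intervalIntegral.integral_const_mul, intervalIntegral.integral_mul_const,
        intervalIntegral.integral_mul_const, intervalIntegral.integral_const]
      try simp [hIdef]
      try ring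
    rw [outer] at key
    linarith
  -- Cauchy-Schwarz for moments
  have hCS : ∀ a b : ℕ, a ≤ p → b ≤ p → I (a+b) ^ 2 ≤ I (a+a) * I (b+b) := by
    intro a b ha hb
    have key : 0 ≤ ∫ s₁ in (0:ℝ)..(2*π), ∫ s₂ in (0:ℝ)..(2*π),
        (η s₁^a * η s₂^b - η s₂^a * η s₁^b)^2 :=
      intervalIntegral.integral_nonneg hπ.le (fun x _ =>
        intervalIntegral.integral_nonneg hπ.le (fun y _ => sq_nonneg _))
    have inner : ∀ x : ℝ, (∫ y in (0:ℝ)..(2*π), (x^a * η y^b - η y^a * x^b)^2)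
        = x^(a+a) * I (b+b) - 2 * x^(a+b) * I (a+b) + x^(b+b) * I (a+a) := by
      intro x
      have e : ∀ y : ℝ, (x^a * y^b - y^a * x^b)^2
          = x^(a+a) * y^(b+b) - (2 * x^(a+b)) * y^(a+b) + x^(b+b) * y^(a+a) := by
        intro y; rw [pow_add, pow_add, pow_add, pow_add, pow_add, pow_add]; ring
      simp_rw [e]
      rw [intervalIntegral.integral_add (((hii (b+b) (by omega)).const_mul _).sub
            ((hii (a+b) (by omega)).const_mul _)) ((hii (a+a) (by omega)).const_mul _),
        intervalIntegral.integral_sub ((hii (b+b) (by omega)).const_mul _)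
            ((hii (a+b) (by omega)).const_mul _),
        intervalIntegral.integral_const_mul, intervalIntegral.integral_const_mul,
        intervalIntegral.integral_const_mul]
      try simp [hIdef]
      try ring
    simp_rw [inner] at key
    have outer : (∫ x in (0:ℝ)..(2*π),
        (η x^(a+a) * I (b+b) - 2 * η x^(a+b) * I (a+b) + η x^(b+b) * I (a+a)))
        = I (a+a) * I (b+b) - 2 * I (a+b) * I (a+b) + I (b+b) * I (a+a) := by
      have e2 : ∀ x : ℝ, η x^(a+a) * I (b+b) - 2 * η x^(a+b) * I (a+b) + η x^(b+b) * I (a+a)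
          = η x^(a+a) * I (b+b) - (η x^(a+b)) * (2 * I (a+b)) + η x^(b+b) * I (a+a) := by
        intro x; ring
      simp_rw [e2]
      rw [intervalIntegral.integral_add (((hii (a+a) (by omega)).mul_const _).sub
            ((hii (a+b) (by omega)).mul_const _)) ((hii (b+b) (by omega)).mul_const _),
        intervalIntegral.integral_sub ((hii (a+a) (by omega)).mul_const _)
            ((hii (a+b) (by omega)).mul_const _),
        intervalIntegral.integral_mul_const, intervalIntegral.integral_mul_const,
        intervalIntegral.integral_mul_const]
      try simp [hIdef]
      try ring
    rw [outer] at key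
    nlinarith [key]
  -- even binomial sum
  have hsum : ∀ n : ℕ, n ≠ 0 →
      ∑ m ∈ Finset.range (n+1), (1 + (-1:ℝ)^m) * n.choose m = 2^n := by
    intro n hn
    have h1 : ∑ m ∈ Finset.range (n+1), ((n.choose m : ℝ)) = 2^n := by
      rw [← Nat.cast_sum]
      rw [Nat.sum_range_choose]
      push_cast
      ring
    have h2 : ∑ m ∈ Finset.range (n+1), ((-1:ℝ)^m * n.choose m) = 0 := by
      have := @Int.alternating_sum_range_choose n
      rw [if_neg hn] at this
      have h3 : ((∑ m ∈ Finset.range (n+1), ((-1:ℤ)^m * n.choose m) : ℤ) : ℝ) = 0 := by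
        rw [this]; norm_num
      rw [← h3]
      push_cast
      ring
    have h4 : ∑ m ∈ Finset.range (n+1), (1 + (-1:ℝ)^m) * n.choose m
        = (∑ m ∈ Finset.range (n+1), ((n.choose m : ℝ)))
          + ∑ m ∈ Finset.range (n+1), ((-1:ℝ)^m * n.choose m) := by
      rw [← Finset.sum_add_distrib]
      exact Finset.sum_congr rfl (fun m _ => by ring)
    rw [h4, h1, h2, add_zero]
  -- the two main bounds
  set A := ∫ s₁ in (0:ℝ)..(2*π), ∫ s₂ in (0:ℝ)..(2*π), (η s₁ - η s₂)^p with hAdef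
  set B := ∫ s₁ in (0:ℝ)..(2*π), ∫ s₂ in (0:ℝ)..(2*π), (η s₁ - η s₂)^(2*p) with hBdef
  have hA0 : 0 ≤ A :=
    intervalIntegral.integral_nonneg hπ.le (fun x _ =>
      intervalIntegral.integral_nonneg hπ.le (fun y _ => hpe.pow_nonneg _))
  have hIp : 0 ≤ I p := hInn p hpe
  have hAle : A ≤ 2^p * π * I p := by
    rw [hAdef, hexp p (by omega)]
    have hterm : ∀ m ∈ Finset.range (p+1),
        (-1:ℝ)^(m+p) * p.choose m * I m * I (p-m)
          ≤ ((1 + (-1:ℝ)^m) * p.choose m) * (π * I p) := by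
      intro m hm
      have hmle : m ≤ p := by have := Finset.mem_range.1 hm; omega
      rcases Nat.even_or_odd m with hme | hmo
      · have h1 : (-1:ℝ)^(m+p) = 1 := (hme.add hpe).neg_one_pow
        have h2 : (-1:ℝ)^m = 1 := hme.neg_one_pow
        rw [h1, h2]
        have hpm : Even (p - m) := by
          rcases hpe with ⟨u, hu⟩; rcases hme with ⟨v, hv⟩
          exact ⟨u - v, by omega⟩
        have := hCheb m (p-m) hme hpm (by omega)
        have hmm : m + (p - m) = p := by omega
        rw [hmm] at this
        have hc : (0:ℝ) ≤ p.choose m := Nat.cast_nonneg _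
        nlinarith [this, hc]
      · have h1 : I m = 0 := hIodd m hmo
        have h2 : (-1:ℝ)^m = -1 := hmo.neg_one_pow
        rw [h1, h2]
        ring_nf
        positivity
    calc ∑ m ∈ Finset.range (p+1), (-1:ℝ)^(m+p) * p.choose m * I m * I (p-m)
        ≤ ∑ m ∈ Finset.range (p+1), ((1 + (-1:ℝ)^m) * p.choose m) * (π * I p) :=
          Finset.sum_le_sum hterm
      _ = (∑ m ∈ Finset.range (p+1), (1 + (-1:ℝ)^m) * p.choose m) * (π * I p) := by
          rw [← Finset.sum_mul]
      _ = 2^p * (π * I p) := by rw [hsum p (by omega)]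
      _ = 2^p * π * I p := by ring
  have hBge : 2^(2*p) * I p ^ 2 ≤ 2 * B := by
    have hBexp : B = ∑ m ∈ Finset.range (2*p+1), (-1:ℝ)^(m+2*p) * (2*p).choose m * I m * I (2*p-m) := by
      rw [hBdef, hexp (2*p) le_rfl]
    have hterm : ∀ m ∈ Finset.range (2*p+1),
        ((1 + (-1:ℝ)^m) * (2*p).choose m) * (I p ^ 2 / 2)
          ≤ (-1:ℝ)^(m+2*p) * (2*p).choose m * I m * I (2*p-m) := by
      intro m hm
      have hmle : m ≤ 2*p := by have := Finset.mem_range.1 hm; omega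
      rcases Nat.even_or_odd m with hme | hmo
      · obtain ⟨c, hc⟩ := hme
        have h1 : (-1:ℝ)^(m+2*p) = 1 := by
          have : Even (m + 2*p) := by exact ⟨c + p, by omega⟩
          exact this.neg_one_pow
        have h2 : (-1:ℝ)^m = 1 := by
          have : Even m := ⟨c, hc⟩
          exact this.neg_one_pow
        rw [h1, h2]
        have hcs := hCS c (p - c) (by omega) (by omega)
        have e1 : c + (p - c) = p := by omega
        have e2 : c + c = m := by omega
        have e3 : (p - c) + (p - c) = 2*p - m := by omega
        rw [e1, e2, e3] at hcs
        have hc0 : (0:ℝ) ≤ (2*p).choose m := Nat.cast_nonneg _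
        nlinarith [hcs, hc0]
      · have h1 : I m = 0 := hIodd m hmo
        have h2 : (-1:ℝ)^m = -1 := hmo.neg_one_pow
        rw [h1, h2]
        ring_nf
        positivity
    have := Finset.sum_le_sum hterm
    rw [← hBexp, ← Finset.sum_mul, hsum (2*p) (by omega)] at this
    have h5 : (2:ℝ)^(2*p) * (I p ^ 2 / 2) ≤ B := this
    linarith
  -- conclude
  rw [div_le_iff₀ (by linarith : (0:ℝ) < 2 * B)]
  have hsq : A^2 ≤ (2^p * π * I p)^2 :=
    pow_le_pow_left₀ hA0 hAle 2
  have h6 : ((2:ℝ)^p * π * I p)^2 = π^2 * (2^(2*p) * I p ^ 2) := by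
    have : (2:ℝ)^(2*p) = ((2:ℝ)^p)^2 := by rw [← pow_mul, Nat.mul_comm]
    rw [this]; ring
  calc A^2 ≤ (2^p * π * I p)^2 := hsq
    _ = π^2 * (2^(2*p) * I p ^ 2) := h6
    _ ≤ π^2 * (2 * B) := by
        have : (0:ℝ) ≤ π^2 := sq_nonneg π
        nlinarith [hBge]
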